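/- Let σ > 0 and let k(x, y) = exp(−‖x − y‖/σ) be the Laplacian kernel on ℝⁿ. Then: (1) the function k♯(x, y) := σ(‖x − y‖ + σ) · k(x, y) satisfies ∇ₓ k♯(x, y) = k(x, y)(y − x) for all x, y ∈ ℝⁿ (including x = y, where both sides vanish); and (2) for all x ≠ y, the function k♭(x, y) := k(x, y) / (σ ‖x − y‖) satisfies ∇ₓ k(x, y) = k♭(x, y)(y − x). -/

import Mathlib

noncomputable section

variable {E : Type*} [NormedAddCommGroup E] [InnerProductSpace ℝ E] [CompleteSpace E]

lemma aux_norm_fderiv {x y : E} (h : x ≠ y) :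
    HasFDerivAt (fun x' => ‖x' - y‖) (‖x - y‖⁻¹ • innerSL ℝ (x - y)) x := by
  have hne : x - y ≠ 0 := sub_ne_zero.2 h
  have hpos : 0 < ‖x - y‖ := norm_pos_iff.2 hne
  have h1 : HasFDerivAt (fun x' : E => ‖x' - y‖ ^ 2)
      (2 • (innerSL ℝ (x - y)).comp (ContinuousLinearMap.id ℝ E)) x := by
    simpa using ((hasFDerivAt_id x).sub_const y).norm_sq
  have h2 : HasDerivAt Real.sqrt (1 / (2 * Real.sqrt (‖x - y‖ ^ 2))) (‖x - y‖ ^ 2) :=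
    Real.hasDerivAt_sqrt (by positivity)
  have h3 := h2.comp_hasFDerivAt x h1
  simp only [Function.comp_def] at h3
  have heq : (fun x' : E => Real.sqrt (‖x' - y‖ ^ 2)) = fun x' => ‖x' - y‖ := by
    funext x'; rw [Real.sqrt_sq (norm_nonneg _)]
  rw [heq] at h3
  refine h3.congr_fderiv ?_
  ext v
  rw [Real.sqrt_sq (norm_nonneg _)]
  simp [ContinuousLinearMap.smul_apply, smul_smul]
  try ring
  try field_simp
  try ring

lemma aux_key {x y : E} (h : x ≠ y) {f : ℝ → ℝ} {f' : ℝ}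
    (hf : HasDerivAt f f' ‖x - y‖) :
    HasGradientAt (fun x' => f ‖x' - y‖) ((f' * ‖x - y‖⁻¹) • (x - y)) x := by
  have h3 := hf.comp_hasFDerivAt x (aux_norm_fderiv h)
  rw [hasGradientAt_iff_hasFDerivAt]
  refine h3.congr_fderiv ?_
  ext v
  simp [InnerProductSpace.toDual_apply_apply, inner_smul_left, smul_smul]
  try ring

/-- **Laplacian sharp and flat.** For the Laplacian kernel
`k(x,y) = exp(−‖x−y‖/σ)`: (1) `k♯(x,y) = σ(‖x−y‖+σ)·k(x,y)` satisfies
`∇ₓ k♯(x,y) = k(x,y)(y − x)` for all `x, y` (including `x = y`), and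
(2) for `x ≠ y`, `k♭(x,y) = k(x,y)/(σ‖x−y‖)` satisfies `∇ₓ k(x,y) = k♭(x,y)(y − x)`. -/
theorem laplacian_sharp_flat {n : ℕ} (σ : ℝ) (hσ : 0 < σ)
    (k ks : EuclideanSpace ℝ (Fin n) → EuclideanSpace ℝ (Fin n) → ℝ)
    (kb : EuclideanSpace ℝ (Fin n) → EuclideanSpace ℝ (Fin n) → ℝ)
    (hk : ∀ x y : EuclideanSpace ℝ (Fin n), k x y = Real.exp (-‖x - y‖ / σ))
    (hks : ∀ x y, ks x y = σ * (‖x - y‖ + σ) * k x y)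
    (hkb : ∀ x y, kb x y = k x y / (σ * ‖x - y‖)) :
    (∀ x y : EuclideanSpace ℝ (Fin n),
      HasGradientAt (fun x' => ks x' y) (k x y • (y - x)) x) ∧
    (∀ x y : EuclideanSpace ℝ (Fin n), x ≠ y →
      HasGradientAt (fun x' => k x' y) (kb x y • (y - x)) x) := by
  constructor
  · intro x y
    by_cases hxy : x = y
    · subst hxy
      have hbound : ∀ t : ℝ, 0 ≤ t →
          |σ * (t + σ) * Real.exp (-t / σ) - σ * σ| ≤ t ^ 2 := by
        intro t ht
        have h3 : Real.exp (-t / σ) * Real.exp (t / σ) = 1 := by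
          rw [← Real.exp_add, neg_div, neg_add_cancel, Real.exp_zero]
        have h4 : 0 < Real.exp (-t / σ) := Real.exp_pos _
        have hA : t + σ ≤ σ * Real.exp (t / σ) := by
          have h := mul_le_mul_of_nonneg_left (Real.add_one_le_exp (t / σ)) hσ.le
          have he : σ * (t / σ + 1) = t + σ := by field_simp
          linarith
        have hB : σ - t ≤ σ * Real.exp (-t / σ) := by
          have h := mul_le_mul_of_nonneg_left (Real.add_one_le_exp (-t / σ)) hσ.le
          have he : σ * (-t / σ + 1) = σ - t := by field_simp; ring
          linarith
        rw [abs_le]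
        constructor
        · nlinarith [mul_le_mul_of_nonneg_left hB (by linarith : (0:ℝ) ≤ t + σ)]
        · have step1 : σ * (t + σ) ≤ σ * (σ * Real.exp (t / σ)) :=
            mul_le_mul_of_nonneg_left hA hσ.le
          have step2 : σ * (t + σ) * Real.exp (-t / σ)
              ≤ σ * (σ * Real.exp (t / σ)) * Real.exp (-t / σ) :=
            mul_le_mul_of_nonneg_right step1 h4.le
          have step3 : σ * (σ * Real.exp (t / σ)) * Real.exp (-t / σ) = σ * σ := by
            rw [show σ * (σ * Real.exp (t / σ)) * Real.exp (-t / σ)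
                = σ * σ * (Real.exp (-t / σ) * Real.exp (t / σ)) from by ring, h3, mul_one]
          nlinarith [sq_nonneg t]
      have hF : HasFDerivAt (fun x' => ks x' x)
          (0 : EuclideanSpace ℝ (Fin n) →L[ℝ] ℝ) x := by
        rw [hasFDerivAt_iff_isLittleO_nhds_zero]
        simp only [ContinuousLinearMap.zero_apply, sub_zero]
        rw [Asymptotics.isLittleO_iff]
        intro ε hε
        filter_upwards [Metric.ball_mem_nhds 0 hε] with h hball
        have hdist : ‖h‖ < ε := by simpa using hball
        have hsub : x + h - x = h := by abel
        have hksx : ks x x = σ * σ := by rw [hks, hk]; simp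
        rw [hks (x + h) x, hk, hksx, hsub]
        calc |σ * (‖h‖ + σ) * Real.exp (-‖h‖ / σ) - σ * σ|
            ≤ ‖h‖ ^ 2 := hbound ‖h‖ (norm_nonneg _)
          _ = ‖h‖ * ‖h‖ := sq ‖h‖
          _ ≤ ε * ‖h‖ := mul_le_mul_of_nonneg_right hdist.le (norm_nonneg _)
      rw [hasGradientAt_iff_hasFDerivAt]
      refine hF.congr_fderiv ?_
      ext v
      simp
    · have hr : (0:ℝ) < ‖x - y‖ := norm_pos_iff.2 (sub_ne_zero.2 hxy)
      have hfd : HasDerivAt (fun t : ℝ => σ * (t + σ) * Real.exp (-t / σ))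
          (-‖x - y‖ * Real.exp (-‖x - y‖ / σ)) ‖x - y‖ := by
        have he : HasDerivAt (fun t : ℝ => Real.exp (-t / σ))
            (Real.exp (-‖x - y‖ / σ) * (-1 / σ)) ‖x - y‖ := by
          have : HasDerivAt (fun t : ℝ => -t / σ) (-1 / σ) ‖x - y‖ := by
            simpa using ((hasDerivAt_id (‖x - y‖)).neg.div_const σ)
          exact (Real.hasDerivAt_exp _).comp _ this
        have hg : HasDerivAt (fun t : ℝ => σ * (t + σ)) σ ‖x - y‖ := by
          simpa using (((hasDerivAt_id (‖x - y‖)).add_const σ).const_mul σ)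
        have := hg.mul he
        refine this.congr_deriv ?_
        field_simp
        ring
      have hmain := aux_key hxy hfd
      have hfun : (fun x' => ks x' y)
          = fun x' => σ * (‖x' - y‖ + σ) * Real.exp (-‖x' - y‖ / σ) := by
        funext x'; rw [hks, hk]
      have hvec : k x y • (y - x)
          = (-‖x - y‖ * Real.exp (-‖x - y‖ / σ) * ‖x - y‖⁻¹) • (x - y) := by
        rw [hk, show (-‖x - y‖ * Real.exp (-‖x - y‖ / σ) * ‖x - y‖⁻¹ : ℝ)
            = -Real.exp (-‖x - y‖ / σ) from by field_simp,
          neg_smul, ← smul_neg, neg_sub]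
      rw [hfun, hvec]
      exact hmain
  · intro x y hxy
    have hr : (0:ℝ) < ‖x - y‖ := norm_pos_iff.2 (sub_ne_zero.2 hxy)
    have hfd : HasDerivAt (fun t : ℝ => Real.exp (-t / σ))
        (Real.exp (-‖x - y‖ / σ) * (-1 / σ)) ‖x - y‖ := by
      have : HasDerivAt (fun t : ℝ => -t / σ) (-1 / σ) ‖x - y‖ := by
        simpa using ((hasDerivAt_id (‖x - y‖)).neg.div_const σ)
      exact (Real.hasDerivAt_exp _).comp _ this
    have hmain := aux_key hxy hfd
    have hfun : (fun x' => k x' y) = fun x' => Real.exp (-‖x' - y‖ / σ) := by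
      funext x'; rw [hk]
    have hvec : kb x y • (y - x)
        = (Real.exp (-‖x - y‖ / σ) * (-1 / σ) * ‖x - y‖⁻¹) • (x - y) := by
      rw [hkb, hk, show (Real.exp (-‖x - y‖ / σ) * (-1 / σ) * ‖x - y‖⁻¹ : ℝ)
          = -(Real.exp (-‖x - y‖ / σ) / (σ * ‖x - y‖)) from by field_simp,
        neg_smul, ← smul_neg, neg_sub]
    rw [hfun, hvec]
    exact hmain
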